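/- Assume the robust control Lyapunov hypothesis holds. Then the finite-horizon min–max value functions are pointwise non-increasing in the horizon: for every k ∈ ℕ and every x ∈ ℝ^n, V (k+1) x ≤ V k x. -/

import Mathlib

/-- Key monotonicity step of Theorems 1 and 2: under the robust control
Lyapunov hypothesis on the terminal cost `Q` and terminal set `CS`, the
finite-horizon min–max value functions `V k` are pointwise non-increasing in
the horizon. -/
theorem value_functions_monotone_in_horizon
    {n d : ℕ}
    (A : (Fin n → ℝ) →ₗ[ℝ] (Fin n → ℝ)) (B : (Fin d → ℝ) →ₗ[ℝ] (Fin n → ℝ))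
    (W X : Set (Fin n → ℝ)) (U : Set (Fin d → ℝ))
    (hW : W.Nonempty)
    (h : (Fin n → ℝ) × (Fin d → ℝ) → ℝ)
    (hpos : ∀ x u, 0 ≤ h (x, u))
    (CS : Set (Fin n → ℝ)) (hCSX : CS ⊆ X)
    (Q : (Fin n → ℝ) → ℝ) (hQ0 : ∀ x ∈ CS, 0 ≤ Q x)
    (Qbar : (Fin n → ℝ) → EReal)
    (hQbarIn : ∀ x ∈ CS, Qbar x = (Q x : EReal))
    (hQbarOut : ∀ x ∉ CS, Qbar x = ⊤)
    (T : ((Fin n → ℝ) → EReal) → (Fin n → ℝ) → EReal)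
    (hTin : ∀ f, ∀ x ∈ X, T f x =
      ⨅ u ∈ U, ⨆ w ∈ W, ((h (x, u) : EReal) + f (A x + B u + w)))
    (hTout : ∀ f, ∀ x ∉ X, T f x = ⊤)
    (V : ℕ → (Fin n → ℝ) → EReal)
    (hV0 : V 0 = Qbar) (hVs : ∀ k, V (k + 1) = T (V k))
    (hRCL : ∀ x ∈ CS, ∃ u ∈ U, ∀ w ∈ W,
      A x + B u + w ∈ CS ∧ h (x, u) + Q (A x + B u + w) ≤ Q x) :
    ∀ (k : ℕ) (x : Fin n → ℝ), V (k + 1) x ≤ V k x := by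
  have Tmono : ∀ f g : (Fin n → ℝ) → EReal, (∀ x, f x ≤ g x) → ∀ x, T f x ≤ T g x := by
    intro f g hfg x
    by_cases hx : x ∈ X
    · rw [hTin f x hx, hTin g x hx]
      exact iInf₂_mono fun u hu => iSup₂_mono fun w hw =>
        add_le_add (le_refl _) (hfg _)
    · rw [hTout f x hx, hTout g x hx]
  intro k
  induction k with
  | zero =>
    intro x
    rw [hVs, hV0]
    by_cases hx : x ∈ CS
    · rw [hTin _ x (hCSX hx), hQbarIn x hx]
      obtain ⟨u, hu, hprop⟩ := hRCL x hx
      refine le_trans (iInf₂_le u hu) (iSup₂_le fun w hw => ?_)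
      obtain ⟨hnext, hle⟩ := hprop w hw
      rw [hQbarIn _ hnext, ← EReal.coe_add]
      exact EReal.coe_le_coe_iff.mpr hle
    · rw [hQbarOut x hx]; exact le_top
  | succ m ih =>
    intro x
    rw [hVs (m+1)]
    exact le_trans (Tmono _ _ ih x) (le_of_eq (congrFun (hVs m) x).symm)
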